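/- Equidistance locus to two subspaces: let V be a finite-dimensional real inner product space and W₁, W₂ subspaces with no containment between them. Then the set Z = {v ∈ V : dist(v, W₁) = dist(v, W₂)} can be written, in suitable orthonormal coordinates, as the zero set of x₁² + ⋯ + x_m² − y₁² − ⋯ − y_n² with m, n ≥ 1 equal to the codimensions of W₁ and W₂ in W₁ + W₂ respectively; consequently Z is a C^∞ regular submanifold of V of codimension 1 away from a linear subspace of codimension at least 2. -/

import Mathlib

open RealInnerProductSpace

private lemma dist_sq_aux {V : Type*} [NormedAddCommGroup V] [InnerProductSpace ℝ V]
    [FiniteDimensional ℝ V] {W₁ W : Submodule ℝ V} (hle : W₁ ≤ W)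
    {ι : Type*} [Fintype ι] (b : OrthonormalBasis ι ℝ ↥(W₁ᗮ ⊓ W)) (v : V) :
    ‖v - (Submodule.orthogonalProjectionOnto W₁ v : V)‖ ^ 2 =
      ‖v - (Submodule.orthogonalProjectionOnto W v : V)‖ ^ 2 + ∑ i, ⟪v, (b i : V)⟫ ^ 2 := by
  set p : V := ↑(Submodule.orthogonalProjectionOnto W v) with hp
  set p₁ : V := ↑(Submodule.orthogonalProjectionOnto W₁ v) with hp₁
  have hpW : p ∈ W := (Submodule.orthogonalProjectionOnto W v).2
  have hp₁W : p₁ ∈ W₁ := (Submodule.orthogonalProjectionOnto W₁ v).2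
  have hvp : v - p ∈ Wᗮ := W.sub_starProjection_mem_orthogonal v
  have hvp₁ : v - p₁ ∈ W₁ᗮ := W₁.sub_starProjection_mem_orthogonal v
  have huA : p - p₁ ∈ W₁ᗮ ⊓ W := by
    refine ⟨?_, Submodule.sub_mem _ hpW (hle hp₁W)⟩
    have : p - p₁ = (v - p₁) - (v - p) := by abel
    rw [this]
    exact Submodule.sub_mem _ hvp₁ (Submodule.orthogonal_le hle hvp)
  have hcoef : ∀ i, ⟪p - p₁, (b i : V)⟫ = ⟪v, (b i : V)⟫ := by
    intro i
    have hbW : ((b i : V)) ∈ W := (b i).2.2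
    have hb1 : ((b i : V)) ∈ W₁ᗮ := (b i).2.1
    have h1 : ⟪v - p, (b i : V)⟫ = 0 := by
      rw [real_inner_comm]; exact hvp _ hbW
    have h2 : ⟪p₁, (b i : V)⟫ = 0 := hb1 _ hp₁W
    have : p - p₁ = v - (v - p) - p₁ := by abel
    rw [this, inner_sub_left, inner_sub_left, h1, h2]
    ring
  have hnorm : ‖p - p₁‖ ^ 2 = ∑ i, ⟪v, (b i : V)⟫ ^ 2 := by
    set u : ↥(W₁ᗮ ⊓ W) := ⟨p - p₁, huA⟩ with hu
    have hsum := b.sum_inner_mul_inner u u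
    have hco : ∀ i, ⟪u, b i⟫ = ⟪v, (b i : V)⟫ := by
      intro i
      rw [Submodule.coe_inner]
      exact hcoef i
    have huu : ⟪u, u⟫ = ‖p - p₁‖ ^ 2 := by
      rw [real_inner_self_eq_norm_sq]
      congr 1
    rw [huu] at hsum
    rw [← hsum]
    refine Finset.sum_congr rfl fun i _ => ?_
    have h2 : ⟪b i, u⟫ = ⟪v, (b i : V)⟫ := by
      rw [real_inner_comm u (b i)]; exact hco i
    rw [hco i, h2]; ring
  have hsplit : v - p₁ = (v - p) + (p - p₁) := by abel
  have horth : ⟪v - p, p - p₁⟫ = 0 := by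
    rw [real_inner_comm]; exact hvp _ huA.2
  rw [hsplit, norm_add_sq_real, horth, hnorm]
  ring

/-- Equidistance locus to two subspaces with no mutual containment: the locus
`Z = {v : dist(v,W₁) = dist(v,W₂)}` is, in suitable orthonormal coordinates, the
zero set of `x₁² + ⋯ + x_m² - y₁² - ⋯ - y_n²` with `m, n ≥ 1` the codimensions of
`W₁` and `W₂` in `W₁ + W₂`; consequently, away from a linear subspace of codimension
at least `2`, `Z` is a regular level set (the defining function has nonvanishing
derivative there), hence a `C^∞` submanifold of codimension `1`. -/
theorem equidistance_locus_structure {V : Type*} [NormedAddCommGroup V]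
    [InnerProductSpace ℝ V] [FiniteDimensional ℝ V]
    (W₁ W₂ : Submodule ℝ V) (h12 : ¬ W₁ ≤ W₂) (h21 : ¬ W₂ ≤ W₁) :
    ∃ (m n : ℕ) (g : Fin m → V) (h : Fin n → V),
      1 ≤ m ∧ 1 ≤ n ∧
      m + Module.finrank ℝ W₁ = Module.finrank ℝ ↥(W₁ ⊔ W₂) ∧
      n + Module.finrank ℝ W₂ = Module.finrank ℝ ↥(W₁ ⊔ W₂) ∧
      Orthonormal ℝ g ∧ Orthonormal ℝ h ∧
      LinearIndependent ℝ (Sum.elim g h) ∧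
      (∀ v : V,
        ‖v - (Submodule.orthogonalProjectionOnto W₁ v : V)‖ = ‖v - (Submodule.orthogonalProjectionOnto W₂ v : V)‖
          ↔ ∑ i, ⟪v, g i⟫ ^ 2 = ∑ j, ⟪v, h j⟫ ^ 2) ∧
      ∃ V' : Submodule ℝ V, Module.finrank ℝ V' + 2 ≤ Module.finrank ℝ V ∧
        ∀ v : V, v ∉ V' →
          (∑ i, ⟪v, g i⟫ ^ 2 = ∑ j, ⟪v, h j⟫ ^ 2) →
          fderiv ℝ (fun w : V => ∑ i, ⟪w, g i⟫ ^ 2 - ∑ j, ⟪w, h j⟫ ^ 2) v ≠ 0 := by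
  classical
  set W : Submodule ℝ V := W₁ ⊔ W₂ with hWdef
  have hle1 : W₁ ≤ W := le_sup_left
  have hle2 : W₂ ≤ W := le_sup_right
  set A : Submodule ℝ V := W₁ᗮ ⊓ W with hAdef
  set B : Submodule ℝ V := W₂ᗮ ⊓ W with hBdef
  set m := Module.finrank ℝ A with hmdef
  set n := Module.finrank ℝ B with hndef
  have hm : Module.finrank ℝ W₁ + m = Module.finrank ℝ W :=
    Submodule.finrank_add_inf_finrank_orthogonal hle1
  have hn : Module.finrank ℝ W₂ + n = Module.finrank ℝ W :=
    Submodule.finrank_add_inf_finrank_orthogonal hle2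
  have hm1 : 1 ≤ m := by
    by_contra hc
    have hm0 : m = 0 := by omega
    have : Module.finrank ℝ W₁ = Module.finrank ℝ W := by omega
    have hEq : W₁ = W := Submodule.eq_of_le_of_finrank_eq hle1 this
    exact h21 (hEq ▸ hle2)
  have hn1 : 1 ≤ n := by
    by_contra hc
    have hn0 : n = 0 := by omega
    have : Module.finrank ℝ W₂ = Module.finrank ℝ W := by omega
    have hEq : W₂ = W := Submodule.eq_of_le_of_finrank_eq hle2 this
    exact h12 (hEq ▸ hle1)
  let bA : OrthonormalBasis (Fin m) ℝ A := stdOrthonormalBasis ℝ A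
  let bB : OrthonormalBasis (Fin n) ℝ B := stdOrthonormalBasis ℝ B
  set g : Fin m → V := fun i => (bA i : V) with hgdef
  set h : Fin n → V := fun j => (bB j : V) with hhdef
  have hgon : Orthonormal ℝ g := bA.orthonormal.comp_linearIsometry A.subtypeₗᵢ
  have hhon : Orthonormal ℝ h := bB.orthonormal.comp_linearIsometry B.subtypeₗᵢ
  have hgA : ∀ i, g i ∈ A := fun i => (bA i).2
  have hhB : ∀ j, h j ∈ B := fun j => (bB j).2
  have hAB : Disjoint A B := by
    rw [Submodule.disjoint_def]
    intro x hxA hxB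
    have hxW : x ∈ W := hxA.2
    have hxWp : x ∈ Wᗮ := by
      rw [hWdef, ← Submodule.inf_orthogonal]
      exact ⟨hxA.1, hxB.1⟩
    exact (Submodule.disjoint_def.1 W.orthogonal_disjoint) x hxW hxWp
  have hli : LinearIndependent ℝ (Sum.elim g h) := by
    refine hgon.linearIndependent.sum_type hhon.linearIndependent ?_
    refine Disjoint.mono ?_ ?_ hAB
    · exact Submodule.span_le.2 (Set.range_subset_iff.2 hgA)
    · exact Submodule.span_le.2 (Set.range_subset_iff.2 hhB)
  refine ⟨m, n, g, h, hm1, hn1, by omega, by omega, hgon, hhon, hli, ?_, ?_⟩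
  · -- equidistance iff
    intro v
    have e1 := dist_sq_aux hle1 bA v
    have e2 := dist_sq_aux hle2 bB v
    constructor
    · intro hEq
      have hsq : ‖v - (Submodule.orthogonalProjectionOnto W₁ v : V)‖ ^ 2
          = ‖v - (Submodule.orthogonalProjectionOnto W₂ v : V)‖ ^ 2 := by rw [hEq]
      rw [e1, e2] at hsq
      exact add_left_cancel hsq
    · intro hEq
      have hsq : ‖v - (Submodule.orthogonalProjectionOnto W₁ v : V)‖ ^ 2
          = ‖v - (Submodule.orthogonalProjectionOnto W₂ v : V)‖ ^ 2 := by
        rw [e1, e2, hEq]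
      calc ‖v - (Submodule.orthogonalProjectionOnto W₁ v : V)‖
          = Real.sqrt (‖v - (Submodule.orthogonalProjectionOnto W₁ v : V)‖ ^ 2) :=
            (Real.sqrt_sq (norm_nonneg _)).symm
        _ = Real.sqrt (‖v - (Submodule.orthogonalProjectionOnto W₂ v : V)‖ ^ 2) := by rw [hsq]
        _ = ‖v - (Submodule.orthogonalProjectionOnto W₂ v : V)‖ := Real.sqrt_sq (norm_nonneg _)
  · -- regular value part
    refine ⟨(Submodule.span ℝ (Set.range (Sum.elim g h)))ᗮ, ?_, ?_⟩
    · have hspan : Module.finrank ℝ (Submodule.span ℝ (Set.range (Sum.elim g h))) = m + n := by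
        rw [finrank_span_eq_card hli]
        simp
      have hfr := Submodule.finrank_add_finrank_orthogonal
        (K := Submodule.span ℝ (Set.range (Sum.elim g h)))
      omega
    · intro v hv _ hD0
      -- derivative computation
      set a : Fin m → ℝ := fun i => ⟪v, g i⟫ with hadef
      set b : Fin n → ℝ := fun j => ⟪v, h j⟫ with hbdef
      set D : V →L[ℝ] ℝ :=
        (∑ i, (2 * a i) • innerSL ℝ (g i)) - ∑ j, (2 * b j) • innerSL ℝ (h j) with hDdef
      have hterm : ∀ x : V, HasFDerivAt (fun w : V => ⟪w, x⟫ ^ 2)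
          ((2 * ⟪v, x⟫) • innerSL ℝ x) v := by
        intro x
        have h1 : HasFDerivAt (fun w : V => ⟪w, x⟫) (innerSL ℝ x) v := by
          have h0 := (innerSL ℝ x).hasFDerivAt (x := v)
          have : (fun w : V => ⟪w, x⟫) = fun w : V => (innerSL ℝ x) w := by
            funext w
            simp [real_inner_comm]
          rw [this]
          exact h0
        have h2 := h1.fun_mul h1
        have h3 : (fun w : V => ⟪w, x⟫ * ⟪w, x⟫) = fun w : V => ⟪w, x⟫ ^ 2 := by
          funext w; ring
        rw [h3] at h2
        rw [two_mul, add_smul]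
        exact h2
      have hF : HasFDerivAt (fun w : V => ∑ i, ⟪w, g i⟫ ^ 2 - ∑ j, ⟪w, h j⟫ ^ 2) D v := by
        rw [hDdef]
        exact (HasFDerivAt.fun_sum fun i _ => hterm (g i)).sub
          (HasFDerivAt.fun_sum fun j _ => hterm (h j))
      rw [hF.fderiv] at hD0
      set u : V := (∑ i, a i • g i) - ∑ j, b j • h j with hudef
      have hDu : D u = 2 * ⟪u, u⟫ := by
        have : ⟪u, u⟫ = ∑ i, a i * ⟪g i, u⟫ - ∑ j, b j * ⟪h j, u⟫ := by
          rw [hudef]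
          rw [inner_sub_left, sum_inner, sum_inner]
          simp [real_inner_smul_left]
        rw [hDdef]
        simp only [ContinuousLinearMap.coe_sub', Pi.sub_apply,
          ContinuousLinearMap.coe_sum', Finset.sum_apply,
          ContinuousLinearMap.coe_smul', Pi.smul_apply, innerSL_apply_apply, smul_eq_mul]
        rw [this, mul_sub, Finset.mul_sum, Finset.mul_sum]
        congr 1 <;> exact Finset.sum_congr rfl fun i _ => by ring
      have hu0 : ⟪u, u⟫ = 0 := by
        have : D u = 0 := by rw [hD0]; simp
        rw [hDu] at this
        linarith only [this]
      have huz : u = 0 := by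
        rwa [inner_self_eq_zero] at hu0
      -- linear independence forces all coefficients zero
      have hcoeff : ∀ k : Fin m ⊕ Fin n, Sum.elim a (fun j => -(b j)) k = 0 := by
        have hsum : ∑ k : Fin m ⊕ Fin n,
            Sum.elim a (fun j => -(b j)) k • Sum.elim g h k = 0 := by
          rw [Fintype.sum_sum_type]
          simp only [Sum.elim_inl, Sum.elim_inr, neg_smul]
          rw [Finset.sum_neg_distrib, ← sub_eq_add_neg]
          exact huz
        exact Fintype.linearIndependent_iff.1 hli _ hsum
      have hvmem : v ∈ (Submodule.span ℝ (Set.range (Sum.elim g h)))ᗮ := by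
        rw [Submodule.mem_orthogonal]
        intro x hx
        induction hx using Submodule.span_induction with
        | mem x hx =>
          obtain ⟨k, rfl⟩ := hx
          cases k with
          | inl i =>
            have := hcoeff (Sum.inl i)
            simp only [Sum.elim_inl] at this ⊢
            rw [real_inner_comm]
            exact this
          | inr j =>
            have := hcoeff (Sum.inr j)
            simp only [Sum.elim_inr] at this ⊢
            rw [real_inner_comm]
            simpa using this
        | zero => simp
        | add x y _ _ hx hy => rw [inner_add_left, hx, hy]; ring
        | smul c x _ hx => rw [inner_smul_left, hx]; ring
      exact hv hvmem
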